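/- If R_c > 1 and (S*, E*, I*, A*, Q*, R*) is the unique equilibrium of the model with all coordinates strictly positive, then S* + E* + I* + A* + Q* + R* = S⁰ and R_c = S⁰/S*. -/

import Mathlib

/-- `(S, E, I, A, Q, R)` is an equilibrium of the COVID-19 model with quarantine and
standard incidence rate: the total population is positive and all six right-hand
sides vanish. -/
def IsEquilibrium (lam β a b c d q1 q2 r1 r2 r3 p S E I A Q R : ℝ) : Prop :=
  0 < S + E + I + A + Q + R ∧
  lam - β * S * (a * E + I + b * A) / (S + E + I + A + Q + R) - d * S = 0 ∧
  β * S * (a * E + I + b * A) / (S + E + I + A + Q + R) - (c + d) * E = 0 ∧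
  p * c * E - (q1 + r1 + d) * I = 0 ∧
  (1 - p) * c * E - (q2 + r2 + d) * A = 0 ∧
  q1 * I + q2 * A - (r3 + d) * Q = 0 ∧
  r1 * I + r2 * A + r3 * Q - d * R = 0

/-- An equilibrium all of whose six coordinates are strictly positive. -/
def IsPositiveEquilibrium (lam β a b c d q1 q2 r1 r2 r3 p S E I A Q R : ℝ) : Prop :=
  IsEquilibrium lam β a b c d q1 q2 r1 r2 r3 p S E I A Q R ∧
  0 < S ∧ 0 < E ∧ 0 < I ∧ 0 < A ∧ 0 < Q ∧ 0 < R

theorem equilibrium_total_population_and_Rc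
    (lam β a b c d q1 q2 r1 r2 r3 p B1 B2 Rc S0 Sstar Estar Istar Astar Qstar Rstar : ℝ)
    (hlam : 0 < lam) (hβ : 0 < β) (ha : 0 < a) (hb : 0 < b) (hc : 0 < c)
    (hd : 0 < d) (hq1 : 0 < q1) (hq2 : 0 < q2) (hr1 : 0 < r1) (hr2 : 0 < r2)
    (hr3 : 0 < r3) (hp : 0 < p) (hp1 : p < 1)
    (hB1 : B1 = q1 + r1 + d) (hB2 : B2 = q2 + r2 + d)
    (hRc : Rc = a * β / (c + d) + p * c * β / ((c + d) * B1)
      + b * β * c * (1 - p) / ((c + d) * B2))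
    (hS0 : S0 = lam / d)
    (hRc1 : 1 < Rc)
    (hstar : IsPositiveEquilibrium lam β a b c d q1 q2 r1 r2 r3 p
      Sstar Estar Istar Astar Qstar Rstar) :
    Sstar + Estar + Istar + Astar + Qstar + Rstar = S0 ∧ Rc = S0 / Sstar := by

  obtain ⟨⟨hNpos, e1, e2, e3, e4, e5, e6⟩, hS, hE, hI, hA, hQ, hR⟩ := hstar
  set N := Sstar + Estar + Istar + Astar + Qstar + Rstar with hNdef
  have hN0 : N ≠ 0 := ne_of_gt hNpos
  subst hB1 hB2
  have hcd : (0:ℝ) < c + d := by linarith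
  have hB1p : (0:ℝ) < q1 + r1 + d := by linarith
  have hB2p : (0:ℝ) < q2 + r2 + d := by linarith
  -- the common incidence fraction
  have h12 : lam - d * Sstar - (c + d) * Estar = 0 := by linarith
  have hNS0 : N = S0 := by
    have : lam - d * N = 0 := by
      rw [hNdef]
      linear_combination h12 + e3 + e4 + e5 + e6
    rw [hS0]
    field_simp
    linarith
  have e2' : β * Sstar * (a * Estar + Istar + b * Astar) = (c + d) * Estar * N := by
    have := e2
    field_simp at this
    linarith
  have hRc' : Rc * ((c + d) * (q1 + r1 + d) * (q2 + r2 + d))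
      = a * β * (q1 + r1 + d) * (q2 + r2 + d) + p * c * β * (q2 + r2 + d) + b * β * c * (1 - p) * (q1 + r1 + d) := by
    rw [hRc]
    field_simp
  have key : ((c + d) * (q1 + r1 + d) * (q2 + r2 + d) * Estar) * (Rc * Sstar)
      = ((c + d) * (q1 + r1 + d) * (q2 + r2 + d) * Estar) * N := by
    linear_combination (Estar * Sstar) * hRc' + (q1 + r1 + d) * (q2 + r2 + d) * e2'
      + β * Sstar * (q2 + r2 + d) * e3 + b * β * Sstar * (q1 + r1 + d) * e4
  have hfac : ((c + d) * (q1 + r1 + d) * (q2 + r2 + d) * Estar) ≠ (0:ℝ) := by positivity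
  have hRS : Rc * Sstar = N := mul_left_cancel₀ hfac key
  constructor
  · exact hNS0
  · rw [eq_div_iff (ne_of_gt hS), hRS, hNS0]
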